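/- Let α be a nonzero real number and let M, H, S, Σ be d×d real matrices with M, H, Σ symmetric. If Σ = (I − α M H) Σ (I − α M H)ᵀ + α² M S Mᵀ, then Σ H M + M H Σ = α · M (S + H Σ H) M. -/
import Mathlib


open Matrix

/-- (Stationary covariance, Proposition 3.) If `α ≠ 0`, `M, H, Σ` are
symmetric, and `Σ` is a fixed point of the iterate-covariance recursion
`Σ = (I − α M H) Σ (I − α M H)ᵀ + α² M S Mᵀ`, then
`Σ H M + M H Σ = α · M (S + H Σ H) M`. -/
theorem stationary_covariance_lyapunov
    (d : ℕ) (α : ℝ) (hα : α ≠ 0)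
    (M H S Sig : Matrix (Fin d) (Fin d) ℝ)
    (hM : M.IsSymm) (hH : H.IsSymm) (hSig : Sig.IsSymm)
    (heq : Sig = (1 - α • (M * H)) * Sig * (1 - α • (M * H))ᵀ + α ^ 2 • (M * S * Mᵀ)) :
    Sig * H * M + M * H * Sig = α • (M * (S + H * Sig * H) * M) := by
  have hMt : Mᵀ = M := hM
  have hHt : Hᵀ = H := hH
  have h1 : (1 - α • (M * H))ᵀ = 1 - α • (H * M) := by
    simp [transpose_sub, transpose_smul, transpose_mul, hMt, hHt]
  rw [h1, hMt] at heq
  have heq2 : Sig = Sig - α • (M * H * Sig) - α • (Sig * (H * M))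
      + (α * α) • (M * H * (Sig * (H * M))) + α ^ 2 • (M * S * M) := by
    conv_lhs => rw [heq]
    simp only [sub_mul, mul_sub, one_mul, mul_one, Matrix.smul_mul, Matrix.mul_smul,
      smul_smul, smul_sub, sub_smul, mul_assoc]
    abel
  have key : α • (Sig * H * M + M * H * Sig)
      = α • (α • (M * (S + H * Sig * H) * M)) := by
    have h2 : α • (M * H * Sig) + α • (Sig * (H * M))
        = (α * α) • (M * H * (Sig * (H * M))) + α ^ 2 • (M * S * M) := by
      have := heq2
      linear_combination (norm := abel) this
    calc α • (Sig * H * M + M * H * Sig)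
        = α • (M * H * Sig) + α • (Sig * (H * M)) := by
          simp only [smul_add, mul_assoc]; abel
      _ = (α * α) • (M * H * (Sig * (H * M))) + α ^ 2 • (M * S * M) := h2
      _ = α • (α • (M * (S + H * Sig * H) * M)) := by
          simp only [mul_add, add_mul, smul_add, smul_smul, pow_two, mul_assoc]
          abel
  exact smul_right_injective _ hα key
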